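/- Let θ ∈ (0,1] with greedy sequence (a_n), errors e_m = θ − Σ_{n=1}^m 1/a_n, and fix N ∈ ℕ. If a_{m+1} ≥ N·a_m² − a_m + 1, then b_m = N·a_m, where N/b_m is the largest fraction with numerator N strictly smaller than e_{m−1} (equivalently, 1/a_m = N/b_m). -/

import Mathlib

lemma floor_facts (x : ℝ) (hx0 : 0 < x) (hx1 : x ≤ 1) (A : ℤ) (hA : A = ⌊1/x⌋ + 1) :
    2 ≤ A ∧ (1:ℝ)/A < x ∧ x ≤ 1/((A:ℝ)-1) := by
  have h1x : (1:ℝ) ≤ 1/x := by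
    rw [le_div_iff₀ hx0]; linarith
  have hfl : (1:ℤ) ≤ ⌊1/x⌋ := by
    rwa [Int.le_floor, Int.cast_one]
  have hA2 : 2 ≤ A := by omega
  have hAR : (2:ℝ) ≤ (A:ℝ) := by exact_mod_cast hA2
  have hApos : (0:ℝ) < (A:ℝ) := by linarith
  have hlt : 1/x < (A:ℝ) := by
    rw [hA]; push_cast; exact Int.lt_floor_add_one _
  have h2 : (1:ℝ)/A < x := by
    rw [div_lt_iff₀ hApos]
    have := (div_lt_iff₀ hx0).mp hlt
    linarith [mul_comm x (A:ℝ)]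
  have hle : ((A:ℝ) - 1) ≤ 1/x := by
    have : ((⌊1/x⌋ : ℝ)) ≤ 1/x := Int.floor_le _
    rw [hA]; push_cast; linarith
  have h3 : x ≤ 1/((A:ℝ)-1) := by
    rw [le_div_iff₀ (by linarith : (0:ℝ) < (A:ℝ)-1)]
    have := (le_div_iff₀ hx0).mp hle
    linarith [mul_comm x ((A:ℝ)-1)]
  exact ⟨hA2, h2, h3⟩

theorem stmt_8 (θ : ℝ) (hθ : θ ∈ Set.Ioc (0:ℝ) 1) (a : ℕ → ℤ)
    (ha1 : a 1 = ⌊1/θ⌋ + 1)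
    (harec : ∀ k, 2 ≤ k →
      a k = ⌊1/(θ - ∑ n ∈ Finset.Ico 1 k, (1:ℝ)/(a n))⌋ + 1)
    (N : ℕ) (hN : 1 ≤ N) (m : ℕ) (hm : 1 ≤ m)
    (h : a (m+1) ≥ N * (a m)^2 - a m + 1) :
    IsLeast {b : ℤ | 0 < b ∧ (N:ℝ)/b < θ - ∑ n ∈ Finset.Ico 1 m, (1:ℝ)/(a n)}
      (N * a m) := by
  obtain ⟨hθ0, hθ1⟩ := hθ
  set E : ℕ → ℝ := fun k => θ - ∑ n ∈ Finset.Ico 1 k, (1:ℝ)/(a n) with hE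
  have hafloor : ∀ k, 1 ≤ k → a k = ⌊1/E k⌋ + 1 := by
    intro k hk
    rcases eq_or_lt_of_le hk with h1 | h2
    · subst h1
      simpa [hE] using ha1
    · exact harec k h2
  have hsum : ∀ k, 1 ≤ k → E (k+1) = E k - 1/(a k) := by
    intro k hk
    simp only [hE]
    rw [Finset.sum_Ico_succ_top hk]
    ring
  have hkey : ∀ k, 1 ≤ k → 0 < E k ∧ E k ≤ 1 := by
    intro k hk
    induction k, hk using Nat.le_induction with
    | base => simpa [hE] using ⟨hθ0, hθ1⟩
    | succ k hk ih =>
      obtain ⟨h0, h1⟩ := ih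
      obtain ⟨hA2, hinv, hle⟩ := floor_facts (E k) h0 h1 (a k) (hafloor k hk)
      have hAR : (2:ℝ) ≤ (a k : ℝ) := by exact_mod_cast hA2
      rw [hsum k hk]
      constructor
      · linarith
      · have h1a : (1:ℝ)/((a k:ℝ)-1) ≤ 1 := by
          rw [div_le_one (by linarith)]; linarith
        have h0a : (0:ℝ) < 1/(a k:ℝ) := by positivity
        linarith
  obtain ⟨hEm0, hEm1⟩ := hkey m hm
  obtain ⟨hA2, hinv, hle⟩ := floor_facts (E m) hEm0 hEm1 (a m) (hafloor m hm)
  obtain ⟨hE0', hE1'⟩ := hkey (m+1) (by omega)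
  obtain ⟨hA2', _, hle'⟩ := floor_facts (E (m+1)) hE0' hE1' (a (m+1)) (hafloor (m+1) (by omega))
  have hAR : (2:ℝ) ≤ (a m : ℝ) := by exact_mod_cast hA2
  have hNR : (1:ℝ) ≤ (N:ℝ) := by exact_mod_cast hN
  have hNA1 : (1:ℝ) ≤ (N:ℝ)*(a m) - 1 := by nlinarith
  -- bound on a(m+1)-1
  have hZ : (a m) * ((N:ℤ) * a m - 1) ≤ a (m+1) - 1 := by nlinarith [h]
  have hZR : ((a m):ℝ) * ((N:ℝ) * (a m) - 1) ≤ ((a (m+1)):ℝ) - 1 := by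
    exact_mod_cast hZ
  have hprodpos : (0:ℝ) < ((a m):ℝ) * ((N:ℝ) * (a m) - 1) := by nlinarith
  have hstep : 1/(((a (m+1)):ℝ) - 1) ≤ 1/(((a m):ℝ) * ((N:ℝ) * (a m) - 1)) :=
    one_div_le_one_div_of_le hprodpos hZR
  have hEm1bound : E (m+1) ≤ 1/(((a m):ℝ) * ((N:ℝ) * (a m) - 1)) := le_trans hle' hstep
  have hEmrel : E m = 1/(a m) + E (m+1) := by rw [hsum m hm]; ring
  have hEmbound : E m ≤ (N:ℝ)/((N:ℝ)*(a m) - 1) := by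
    have heq : 1/((a m):ℝ) + 1/(((a m):ℝ) * ((N:ℝ) * (a m) - 1))
        = (N:ℝ)/((N:ℝ)*(a m) - 1) := by
      field_simp
      have hx : (((a m):ℝ) * (N:ℝ) - 1) ≠ 0 := by
        intro h0; nlinarith [mul_comm ((a m):ℝ) (N:ℝ)]
      rw [eq_div_iff hx, add_mul, one_div_mul_cancel hx]
      ring
    rw [hEmrel]
    linarith [hEm1bound, heq]
  have hNZ : (1:ℤ) ≤ (N:ℤ) := by exact_mod_cast hN
  constructor
  · refine ⟨by nlinarith, ?_⟩
    have hcast : (((N:ℤ) * a m : ℤ):ℝ) = (N:ℝ)*((a m):ℝ) := by push_cast; ring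
    have heq1 : ((N:ℝ))/((N:ℝ)*((a m):ℝ)) = 1/((a m):ℝ) := by
      rw [div_eq_div_iff (by nlinarith) (by linarith)]
      ring
    rw [hcast, heq1]
    exact hinv
  · intro b hb
    obtain ⟨hb0, hbE⟩ := hb
    by_contra hcon
    push_neg at hcon
    have hble : b ≤ (N:ℤ) * a m - 1 := by omega
    have hbleR : (b:ℝ) ≤ (N:ℝ) * (a m) - 1 := by exact_mod_cast hble
    have hb0R : (0:ℝ) < (b:ℝ) := by exact_mod_cast hb0
    have : (N:ℝ)/((N:ℝ)*(a m) - 1) ≤ (N:ℝ)/(b:ℝ) :=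
      div_le_div_of_nonneg_left (by linarith) hb0R hbleR
    have hbE' : (N:ℝ)/(b:ℝ) < E m := hbE
    linarith
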